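/- For every integer κ ≥ 2, the strict inequality √(2κ(κ+1)) + (3/2)(κ+1) > (κ+1)·(1 + 1/κ)^κ + 1 holds. -/
import Mathlib


theorem linear_worse_than_exponential (κ : ℕ) (hκ : 2 ≤ κ) :
    Real.sqrt (2 * κ * (κ + 1)) + 3 / 2 * ((κ : ℝ) + 1) >
      ((κ : ℝ) + 1) * (1 + 1 / κ) ^ κ + 1 := by
  have hs0 := Real.sqrt_nonneg (2 * (κ:ℝ) * (κ + 1))
  have hs2 := Real.sq_sqrt (show (0:ℝ) ≤ 2 * (κ:ℝ) * (κ + 1) by positivity)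
  rcases le_or_gt κ 8 with h8 | h8
  · interval_cases κ <;> norm_num <;>
      nlinarith [Real.sq_sqrt (show (0:ℝ) ≤ 12 by norm_num), Real.sqrt_nonneg (12:ℝ),
        Real.sq_sqrt (show (0:ℝ) ≤ 24 by norm_num), Real.sqrt_nonneg (24:ℝ),
        Real.sq_sqrt (show (0:ℝ) ≤ 40 by norm_num), Real.sqrt_nonneg (40:ℝ),
        Real.sq_sqrt (show (0:ℝ) ≤ 60 by norm_num), Real.sqrt_nonneg (60:ℝ),
        Real.sq_sqrt (show (0:ℝ) ≤ 84 by norm_num), Real.sqrt_nonneg (84:ℝ),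
        Real.sq_sqrt (show (0:ℝ) ≤ 112 by norm_num), Real.sqrt_nonneg (112:ℝ),
        Real.sq_sqrt (show (0:ℝ) ≤ 144 by norm_num), Real.sqrt_nonneg (144:ℝ)]
  · -- κ ≥ 9
    have hx : (9:ℝ) ≤ (κ:ℝ) := by exact_mod_cast h8
    have hκ0 : (0:ℝ) < (κ:ℝ) := by linarith
    -- (1+1/κ)^κ ≤ e
    have h1 : (1 + 1 / (κ:ℝ)) ≤ Real.exp (1 / κ) := by
      have := Real.add_one_le_exp (1 / (κ:ℝ))
      linarith
    have h2 : (1 + 1 / (κ:ℝ)) ^ κ ≤ Real.exp (1 / κ) ^ κ := by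
      apply pow_le_pow_left₀ (by positivity) h1
    have h3 : Real.exp (1 / (κ:ℝ)) ^ κ = Real.exp 1 := by
      rw [← Real.exp_nat_mul]
      congr 1
      field_simp
    have h4 : (1 + 1 / (κ:ℝ)) ^ κ < 2.7182818286 := by
      rw [h3] at h2
      exact lt_of_le_of_lt h2 Real.exp_one_lt_d9
    -- sqrt bound
    have h5 : (1.414213562 : ℝ) * ((κ:ℝ) + 0.4) ≤ Real.sqrt (2 * (κ:ℝ) * (κ + 1)) := by
      rw [Real.le_sqrt (by positivity) (by positivity)]
      nlinarith
    have h6 : ((κ:ℝ) + 1) * (1 + 1 / (κ:ℝ)) ^ κ < ((κ:ℝ) + 1) * 2.7182818286 :=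
      mul_lt_mul_of_pos_left h4 (by linarith)
    linarith [h5, h6, hx]
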